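/- Let H₁, K₁, H₂, K₂ be complex Hilbert spaces and let f : S(K(H₁,K₁)) → S(K(H₂,K₂)) be a surjective isometry between the unit spheres of the corresponding spaces of compact operators. Then: (i) for every finite-rank partial isometry e ∈ K(H₁,K₁) of norm one, f(−e) = −f(e); (ii) if e₁, …, e_m are mutually orthogonal rank-one partial isometries in K(H₁,K₁), then f(e₁), …, f(e_m) are mutually orthogonal rank-one partial isometries in K(H₂,K₂) and f(e₁ + ⋯ + e_m) = f(e₁) + ⋯ + f(e_m). -/

import Mathlib

noncomputable section

/-- A partial isometry between Hilbert spaces: `e ∘ e* ∘ e = e`. -/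
def IsPartialIsom {H K : Type*}
    [NormedAddCommGroup H] [InnerProductSpace ℂ H] [CompleteSpace H]
    [NormedAddCommGroup K] [InnerProductSpace ℂ K] [CompleteSpace K]
    (e : H →L[ℂ] K) : Prop :=
  e.comp ((ContinuousLinearMap.adjoint e).comp e) = e

/-- Two operators `a, b` are orthogonal: `a ∘ b* = 0` and `b* ∘ a = 0`. -/
def OrthogonalOps {H K : Type*}
    [NormedAddCommGroup H] [InnerProductSpace ℂ H] [CompleteSpace H]
    [NormedAddCommGroup K] [InnerProductSpace ℂ K] [CompleteSpace K]
    (a b : H →L[ℂ] K) : Prop :=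
  a.comp (ContinuousLinearMap.adjoint b) = 0 ∧ (ContinuousLinearMap.adjoint b).comp a = 0

set_option linter.unusedSectionVars false
set_option linter.unnecessarySimpa false
set_option linter.unreachableTactic false
set_option linter.unusedTactic false

namespace TingleyAux

lemma ne_zero_of_norm_eq_one {E : Type*} [NormedAddCommGroup E] {x : E} (h : ‖x‖ = 1) :
    x ≠ 0 := by
  intro hh
  rw [hh, norm_zero] at h
  norm_num at h

variable {H K : Type*}
  [NormedAddCommGroup H] [InnerProductSpace ℂ H] [CompleteSpace H]
  [NormedAddCommGroup K] [InnerProductSpace ℂ K] [CompleteSpace K]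

local notation "⟪" x ", " y "⟫" => @inner ℂ _ _ x y

/-! ### Vector lemmas -/

section Vec
variable {E : Type*} [NormedAddCommGroup E] [InnerProductSpace ℂ E]

lemma eq_of_inner_one {a c : E} (ha : ‖a‖ ≤ 1) (hc : ‖c‖ = 1) (h : ⟪a, c⟫ = 1) : a = c := by
  have h2 := norm_sub_sq (𝕜 := ℂ) a c
  rw [h] at h2
  have h3 : ‖a - c‖ ^ 2 ≤ 0 := by
    rw [h2]; simp only [RCLike.one_re]; nlinarith [norm_nonneg a]
  have : ‖a - c‖ = 0 := by nlinarith [norm_nonneg (a - c)]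
  rwa [norm_sub_eq_zero_iff] at this

lemma zero_of_close_pm {p q : E} (hq : ‖q‖ = 1) (h1 : ‖p - q‖ ≤ 1) (h2 : ‖p + q‖ ≤ 1) :
    p = 0 := by
  have hpar := parallelogram_law_with_norm ℂ p q
  have hp0 : ‖p‖ * ‖p‖ ≤ 0 := by nlinarith [norm_nonneg (p - q), norm_nonneg (p + q)]
  have : ‖p‖ = 0 := le_antisymm (by nlinarith [norm_nonneg p]) (norm_nonneg _)
  rwa [norm_eq_zero] at this

lemma neg_of_dist_two {a b : E} (ha : ‖a‖ ≤ 1) (hb : ‖b‖ ≤ 1) (h : ‖a - b‖ = 2) :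
    a = -b ∧ ‖a‖ = 1 ∧ ‖b‖ = 1 := by
  have hpar := parallelogram_law_with_norm ℂ a b
  have ha2 : ‖a‖ * ‖a‖ ≤ 1 := by nlinarith [norm_nonneg a]
  have hb2 : ‖b‖ * ‖b‖ ≤ 1 := by nlinarith [norm_nonneg b]
  have hab0 : ‖a + b‖ * ‖a + b‖ ≤ 0 := by nlinarith
  have hab : ‖a + b‖ = 0 :=
    le_antisymm (by nlinarith [norm_nonneg (a + b)]) (norm_nonneg _)
  rw [norm_eq_zero] at hab
  have h1 : a = -b := eq_neg_of_add_eq_zero_left hab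
  have hb1 : ‖b‖ = 1 := by
    rw [h1] at h
    have h5 : ‖(-b) - b‖ = 2 * ‖b‖ := by
      rw [show (-b) - b = (-2 : ℂ) • b by module, norm_smul]
      simp
    nlinarith
  refine ⟨h1, ?_, hb1⟩
  rw [h1, norm_neg, hb1]

lemma collinear_of_inner_one {ξ ζ : E} (hξ : ‖ξ‖ = 1) (hζ : ‖ζ‖ = 1)
    (h : ‖⟪ξ, ζ⟫‖ = 1) : ζ = ⟪ξ, ζ⟫ • ξ := by
  have h2 := norm_sub_sq (𝕜 := ℂ) ζ (⟪ξ, ζ⟫ • ξ)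
  have hinner : ⟪ζ, ⟪ξ, ζ⟫ • ξ⟫ = 1 := by
    rw [inner_smul_right, ← inner_conj_symm ζ ξ, RCLike.mul_conj, h]
    norm_num
  have hts : ‖⟪ξ, ζ⟫ • ξ‖ = 1 := by rw [norm_smul, hξ, h]; ring
  rw [hinner, hts, hζ] at h2
  norm_num [RCLike.one_re] at h2
  exact sub_eq_zero.mp h2

lemma norm_sq_add_of_inner_zero {a b : E} (h : ⟪a, b⟫ = 0) :
    ‖a + b‖ ^ 2 = ‖a‖ ^ 2 + ‖b‖ ^ 2 := by
  have h2 := norm_add_sq (𝕜 := ℂ) a b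
  rw [h] at h2; simpa using h2

end Vec

/-! ### Rank one operators -/

/-- The rank-one operator `x ↦ ⟪ξ, x⟫ • η`. -/
def rk1 (η : K) (ξ : H) : H →L[ℂ] K := (innerSL ℂ ξ).smulRight η

@[simp] lemma rk1_apply (η : K) (ξ : H) (x : H) : rk1 η ξ x = ⟪ξ, x⟫ • η := rfl

lemma rk1_neg (η : K) (ξ : H) : rk1 (-η) ξ = -(rk1 η ξ) := by
  ext x; simp

lemma rk1_norm_le (η : K) (ξ : H) : ‖rk1 η ξ‖ ≤ ‖ξ‖ * ‖η‖ := by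
  rw [rk1, ContinuousLinearMap.norm_smulRight_apply, innerSL_apply_norm]

lemma rk1_norm {η : K} {ξ : H} (hη : ‖η‖ = 1) (hξ : ‖ξ‖ = 1) : ‖rk1 η ξ‖ = 1 := by
  refine le_antisymm (by simpa [hη, hξ] using rk1_norm_le η ξ) ?_
  have h := (rk1 η ξ).unit_le_opNorm ξ hξ.le
  rw [rk1_apply, inner_self_eq_norm_sq_to_K, hξ] at h
  simpa [norm_smul, hη] using h

lemma rk1_adjoint (η : K) (ξ : H) :
    ContinuousLinearMap.adjoint (rk1 η ξ) = rk1 ξ η := by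
  symm
  rw [ContinuousLinearMap.eq_adjoint_iff]
  intro x y
  simp [rk1_apply, inner_smul_left, inner_smul_right, inner_conj_symm, mul_comm]

lemma rk1_compact (η : K) (ξ : H) : IsCompactOperator (rk1 η ξ) := by
  refine ⟨(fun c : ℂ => c • η) '' Metric.closedBall 0 ‖ξ‖,
    (isCompact_closedBall 0 ‖ξ‖).image (continuous_id.smul continuous_const), ?_⟩
  refine Filter.mem_of_superset (Metric.ball_mem_nhds 0 one_pos) ?_
  intro x hx
  refine ⟨⟪ξ, x⟫, ?_, rfl⟩
  simp only [Metric.mem_closedBall, dist_zero_right]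
  calc ‖⟪ξ, x⟫‖ ≤ ‖ξ‖ * ‖x‖ := norm_inner_le_norm ξ x
  _ ≤ ‖ξ‖ * 1 := by
      have := (Metric.mem_ball.mp hx); rw [dist_zero_right] at this
      exact mul_le_mul_of_nonneg_left this.le (norm_nonneg ξ)
  _ = ‖ξ‖ := mul_one _

lemma isCompactOperator_sum {ι : Type*} (s : Finset ι) (T : ι → H →L[ℂ] K)
    (h : ∀ i, IsCompactOperator (T i)) : IsCompactOperator ((∑ i ∈ s, T i : H →L[ℂ] K)) := by
  classical
  induction s using Finset.cons_induction with
  | empty => simpa [ContinuousLinearMap.coe_zero] using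
      (isCompactOperator_zero : IsCompactOperator (0 : H → K))
  | cons a s ha ih =>
      rw [Finset.sum_cons]
      have := (h a).add ih
      simpa [ContinuousLinearMap.coe_add'] using this

lemma compact_clm_neg {T : H →L[ℂ] K} (h : IsCompactOperator T) :
    IsCompactOperator (-T) := by
  simpa [ContinuousLinearMap.coe_neg'] using h.neg

lemma compact_clm_sub {T U : H →L[ℂ] K} (h : IsCompactOperator T)
    (h' : IsCompactOperator U) : IsCompactOperator (T - U) := by
  simpa [ContinuousLinearMap.coe_sub'] using h.sub h'

/-! ### Norm attainment for compact operators -/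

open Filter Topology in
lemma exists_norm_one_attain (T : H →L[ℂ] K) (hc : IsCompactOperator T) (hT : ‖T‖ = 1) :
    ∃ ξ : H, ‖ξ‖ = 1 ∧ ‖T ξ‖ = 1 := by
  have hseq : ∀ n : ℕ, ∃ ζ : H, ‖ζ‖ = 1 ∧ 1 - 1/((n:ℝ)+1) < ‖T ζ‖ := by
    intro n
    have hr : (1:ℝ) - 1/((n:ℝ)+1) < ‖T‖ := by
      rw [hT]
      have : (0:ℝ) < 1/((n:ℝ)+1) := by positivity
      linarith
    obtain ⟨x, hx1, hx2⟩ := T.exists_lt_apply_of_lt_opNorm hr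
    have hx0 : x ≠ 0 := by
      rintro rfl
      simp only [map_zero, norm_zero] at hx2
      have h01 : (0:ℝ) < 1/((n:ℝ)+1) := by positivity
      have h02 : 1/((n:ℝ)+1) ≤ 1 := by
        rw [div_le_one (by positivity)]
        simp [Nat.cast_nonneg]
      linarith
    have hxpos : 0 < ‖x‖ := norm_pos_iff.mpr hx0
    refine ⟨((‖x‖⁻¹ : ℝ) : ℂ) • x, ?_, ?_⟩
    · rw [norm_smul, Complex.norm_real, norm_inv, norm_norm,
        inv_mul_cancel₀ (ne_of_gt hxpos)]
    · rw [map_smul, norm_smul, Complex.norm_real, norm_inv, norm_norm]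
      have hinv : (1:ℝ) ≤ ‖x‖⁻¹ := (one_le_inv₀ hxpos).mpr hx1.le
      calc (1:ℝ) - 1/((n:ℝ)+1) < ‖T x‖ := hx2
        _ = 1 * ‖T x‖ := (one_mul _).symm
        _ ≤ ‖x‖⁻¹ * ‖T x‖ := by
            exact mul_le_mul_of_nonneg_right hinv (norm_nonneg _)
  choose ζ hζ1 hζ2 using hseq
  obtain ⟨C, hCc, hCm⟩ := hc
  obtain ⟨ε, hε, hball⟩ := Metric.mem_nhds_iff.mp hCm
  set c : ℂ := ((ε/2 : ℝ) : ℂ) with hcdef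
  have hc0 : c ≠ 0 := by
    simp only [hcdef, ne_eq, Complex.ofReal_eq_zero]
    positivity
  have hwmem : ∀ n, (c • T (ζ n)) ∈ C := by
    intro n
    have h1 : c • T (ζ n) = T (c • ζ n) := (map_smul T c (ζ n)).symm
    rw [h1]
    apply hball
    rw [Metric.mem_ball, dist_zero_right, norm_smul, hζ1, mul_one, hcdef]
    rw [Complex.norm_real, Real.norm_of_nonneg (by positivity)]
    linarith
  obtain ⟨y', hy'C, φ, hφmono, hφtend⟩ := hCc.tendsto_subseq hwmem
  have htend : Tendsto (fun n => T (ζ (φ n))) atTop (𝓝 (c⁻¹ • y')) := by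
    have h2 := hφtend.const_smul (c⁻¹)
    have h3 : (fun n => c⁻¹ • (c • T (ζ (φ n)))) = fun n => T (ζ (φ n)) := by
      funext n
      rw [smul_smul, inv_mul_cancel₀ hc0, one_smul]
    rw [show ((fun n => c • T (ζ n)) ∘ φ) = fun n => c • T (ζ (φ n)) from rfl] at h2
    rwa [h3] at h2
  set y : K := c⁻¹ • y' with hydef
  have hnorm_tend : Tendsto (fun n => ‖T (ζ (φ n))‖) atTop (𝓝 ‖y‖) := htend.norm
  have hlow : Tendsto (fun n : ℕ => 1 - 1/((n:ℝ)+1)) atTop (𝓝 1) := by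
    have h4 := (tendsto_one_div_add_atTop_nhds_zero_nat :
      Tendsto (fun n : ℕ => 1 / ((n : ℝ) + 1)) atTop (𝓝 0))
    have h5 := (tendsto_const_nhds (x := (1:ℝ)) (f := atTop)).sub h4
    simpa using h5
  have hy1 : ‖y‖ = 1 := by
    apply tendsto_nhds_unique hnorm_tend
    apply tendsto_of_tendsto_of_tendsto_of_le_of_le hlow tendsto_const_nhds
    · intro n
      have hn : (n:ℝ) ≤ (φ n : ℝ) := by exact_mod_cast hφmono.le_apply
      have : 1/((φ n : ℝ)+1) ≤ 1/((n:ℝ)+1) := by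
        apply one_div_le_one_div_of_le
        · positivity
        · linarith
      linarith [(hζ2 (φ n)).le]
    · intro n
      calc ‖T (ζ (φ n))‖ ≤ ‖T‖ := T.unit_le_opNorm _ (hζ1 _).le
        _ = 1 := hT
  set ξ0 : H := ContinuousLinearMap.adjoint T y with hξdef
  have hinner_tend : Tendsto (fun n => ⟪ξ0, ζ (φ n)⟫) atTop (𝓝 (1:ℂ)) := by
    have h6 : (fun n => ⟪ξ0, ζ (φ n)⟫) = fun n => ⟪y, T (ζ (φ n))⟫ := by
      funext n
      exact ContinuousLinearMap.adjoint_inner_left T (ζ (φ n)) y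
    rw [h6]
    have h7 : Tendsto (fun n => ⟪y, T (ζ (φ n))⟫) atTop (𝓝 ⟪y, y⟫) :=
      tendsto_const_nhds.inner htend
    have h8 : ⟪y, y⟫ = (1:ℂ) := by
      rw [inner_self_eq_norm_sq_to_K, hy1]; norm_num
    rwa [h8] at h7
  have hre_tend : Tendsto (fun n => (⟪ξ0, ζ (φ n)⟫).re) atTop (𝓝 1) := by
    have := (Complex.continuous_re.tendsto (1:ℂ)).comp hinner_tend
    exact this
  have hle : 1 ≤ ‖ξ0‖ := by
    apply le_of_tendsto hre_tend
    filter_upwards with n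
    calc (⟪ξ0, ζ (φ n)⟫).re ≤ ‖⟪ξ0, ζ (φ n)⟫‖ := by
          exact Complex.re_le_norm _
      _ ≤ ‖ξ0‖ * ‖ζ (φ n)‖ := norm_inner_le_norm _ _
      _ = ‖ξ0‖ := by rw [hζ1, mul_one]
  have hge : ‖ξ0‖ ≤ 1 := by
    calc ‖ξ0‖ ≤ ‖ContinuousLinearMap.adjoint T‖ * ‖y‖ :=
          (ContinuousLinearMap.adjoint T).le_opNorm y
      _ = 1 := by
          rw [hy1, mul_one]
          rw [show ‖ContinuousLinearMap.adjoint T‖ = ‖T‖ from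
            LinearIsometryEquiv.norm_map ContinuousLinearMap.adjoint T]
          exact hT
  have hξ0 : ‖ξ0‖ = 1 := le_antisymm hge hle
  have hyT : ⟪y, T ξ0⟫ = 1 := by
    rw [← ContinuousLinearMap.adjoint_inner_left T ξ0 y, ← hξdef]
    rw [inner_self_eq_norm_sq_to_K, hξ0]; norm_num
  refine ⟨ξ0, hξ0, ?_⟩
  have hTξle : ‖T ξ0‖ ≤ 1 := by
    have := T.unit_le_opNorm ξ0 hξ0.le
    rwa [hT] at this
  have hrey : RCLike.re ⟪T ξ0, y⟫ = 1 := by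
    rw [← inner_conj_symm (T ξ0) y, hyT]
    simp
  have hsub := norm_sub_sq (𝕜 := ℂ) (T ξ0) y
  rw [hrey, hy1] at hsub
  have h0 : ‖T ξ0 - y‖ ^ 2 ≤ 0 := by rw [hsub]; nlinarith [norm_nonneg (T ξ0)]
  have hTy : T ξ0 = y := by
    have h9 : ‖T ξ0 - y‖ = 0 :=
      le_antisymm (by nlinarith [norm_nonneg (T ξ0 - y)]) (norm_nonneg _)
    rwa [norm_sub_eq_zero_iff] at h9
  rw [hTy, hy1]

lemma dist_two_attain {x y : H →L[ℂ] K} (hxc : IsCompactOperator x) (hyc : IsCompactOperator y)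
    (hxn : ‖x‖ ≤ 1) (hyn : ‖y‖ ≤ 1) (h : ‖x - y‖ = 2) :
    ∃ ζ : H, ‖ζ‖ = 1 ∧ ‖x ζ‖ = 1 ∧ ‖y ζ‖ = 1 ∧ x ζ = -(y ζ) := by
  have hTc : IsCompactOperator ((2⁻¹ : ℂ) • (x - y)) := by
    have h1 := (compact_clm_sub hxc hyc).smul (2⁻¹ : ℂ)
    simpa [ContinuousLinearMap.coe_smul'] using h1
  have hTn : ‖(2⁻¹ : ℂ) • (x - y)‖ = 1 := by
    rw [norm_smul (2⁻¹ : ℂ) (x - y), h]; norm_num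
  obtain ⟨ζ, hζ1, hζ2⟩ := exists_norm_one_attain _ hTc hTn
  have happ : ‖x ζ - y ζ‖ = 2 := by
    have h2 : ((2⁻¹ : ℂ) • (x - y)) ζ = (2⁻¹ : ℂ) • (x ζ - y ζ) := by simp
    rw [h2, norm_smul] at hζ2
    norm_num at hζ2
    linarith
  have hxz : ‖x ζ‖ ≤ 1 := le_trans (x.unit_le_opNorm ζ hζ1.le) hxn
  have hyz : ‖y ζ‖ ≤ 1 := le_trans (y.unit_le_opNorm ζ hζ1.le) hyn
  obtain ⟨h1, h2, h3⟩ := neg_of_dist_two hxz hyz happ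
  exact ⟨ζ, hζ1, h2, h3, h1⟩

/-! ### Orthonormal families and faces -/

lemma orthonormal_single {E : Type*} [NormedAddCommGroup E] [InnerProductSpace ℂ E]
    {ξ : E} (hξ : ‖ξ‖ = 1) : Orthonormal ℂ (fun _ : Fin 1 => ξ) :=
  ⟨fun _ => hξ, fun i j hij => absurd (Subsingleton.elim i j) hij⟩

lemma orthonormal_neg {E : Type*} [NormedAddCommGroup E] [InnerProductSpace ℂ E]
    {ι : Type*} {v : ι → E} (h : Orthonormal ℂ v) : Orthonormal ℂ (fun i => -(v i)) :=
  ⟨fun i => by rw [norm_neg]; exact h.1 i,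
   fun i j hij => by simpa [inner_neg_neg] using h.2 hij⟩

section Family

variable {m : ℕ} {ξv : Fin m → H} {ηv : Fin m → K}

lemma sum_rk1_apply (x : H) :
    (∑ i, rk1 (ηv i) (ξv i)) x = ∑ i, ⟪ξv i, x⟫ • ηv i := by
  rw [ContinuousLinearMap.sum_apply]
  exact Finset.sum_congr rfl fun i _ => rk1_apply _ _ _

lemma sum_rk1_apply_xi (hξ : Orthonormal ℂ ξv) (j : Fin m) :
    (∑ i, rk1 (ηv i) (ξv i)) (ξv j) = ηv j := by
  rw [sum_rk1_apply]
  rw [Finset.sum_eq_single j]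
  · rw [inner_self_eq_norm_sq_to_K, hξ.1 j]; norm_num
  · intro i _ hij
    rw [hξ.2 hij, zero_smul]
  · intro hj; exact absurd (Finset.mem_univ j) hj

lemma sum_rk1_adjoint :
    ContinuousLinearMap.adjoint (∑ i, rk1 (ηv i) (ξv i)) = ∑ i, rk1 (ξv i) (ηv i) := by
  rw [map_sum]
  exact Finset.sum_congr rfl fun i _ => rk1_adjoint _ _

lemma sum_rk1_compact : IsCompactOperator ((∑ i, rk1 (ηv i) (ξv i) : H →L[ℂ] K)) :=
  isCompactOperator_sum Finset.univ _ (fun i => rk1_compact (ηv i) (ξv i))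

lemma proj_inner_zero (hξ : Orthonormal ℂ ξv) (z : H) (j : Fin m) :
    ⟪ξv j, z - ∑ i, ⟪ξv i, z⟫ • ξv i⟫ = 0 := by
  rw [inner_sub_right, hξ.inner_right_fintype]
  exact sub_self _

lemma norm_sum_smul_sq {E : Type*} [NormedAddCommGroup E] [InnerProductSpace ℂ E]
    {v : Fin m → E} (hv : Orthonormal ℂ v) (l : Fin m → ℂ) :
    ‖∑ i, l i • v i‖^2 = ∑ i, ‖l i‖^2 := by
  have h := hv.inner_sum l l Finset.univ
  have h2 : ⟪∑ i, l i • v i, ∑ i, l i • v i⟫ = ((∑ i, ‖l i‖^2 : ℝ) : ℂ) := by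
    rw [h]; push_cast
    refine Finset.sum_congr rfl fun i _ => ?_
    rw [RCLike.conj_mul]; norm_cast
  have h3 := inner_self_eq_norm_sq_to_K (𝕜 := ℂ) (∑ i, l i • v i)
  have h4 := h2.symm.trans h3
  have h6 := congrArg Complex.re h4
  simpa [← Complex.ofReal_pow] using h6.symm

lemma norm_proj_sq (hξ : Orthonormal ℂ ξv) (z : H) :
    ‖z‖^2 = ‖∑ i, ⟪ξv i, z⟫ • ξv i‖^2 + ‖z - ∑ i, ⟪ξv i, z⟫ • ξv i‖^2 := by
  set q := ∑ i, ⟪ξv i, z⟫ • ξv i with hq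
  have hqr : ⟪q, z - q⟫ = 0 := by
    rw [hq, sum_inner]
    refine Finset.sum_eq_zero fun i _ => ?_
    rw [inner_smul_left, ← hq, proj_inner_zero hξ z i, mul_zero]
  have h := norm_sq_add_of_inner_zero hqr
  rw [add_sub_cancel] at h
  exact h

/-- Norm bound: a sum of rank-one pieces plus an "orthogonal" operator has norm at most one. -/
lemma norm_sum_add_le (hξ : Orthonormal ℂ ξv) (hη : Orthonormal ℂ ηv)
    (b : H →L[ℂ] K) (hb1 : ∀ i, b (ξv i) = 0)
    (hb2 : ∀ i, ContinuousLinearMap.adjoint b (ηv i) = 0) (hbn : ‖b‖ ≤ 1) :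
    ‖(∑ i, rk1 (ηv i) (ξv i)) + b‖ ≤ 1 := by
  refine ContinuousLinearMap.opNorm_le_bound _ zero_le_one fun x => ?_
  rw [one_mul, ContinuousLinearMap.add_apply, sum_rk1_apply]
  set q := ∑ i, ⟪ξv i, x⟫ • ξv i with hq
  have hbq : b q = 0 := by
    rw [hq, map_sum]
    exact Finset.sum_eq_zero fun i _ => by rw [map_smul, hb1 i, smul_zero]
  have hbx : b x = b (x - q) := by rw [map_sub, hbq, sub_zero]
  have hcross : ⟪∑ i, ⟪ξv i, x⟫ • ηv i, b x⟫ = 0 := by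
    rw [sum_inner]
    refine Finset.sum_eq_zero fun i _ => ?_
    rw [inner_smul_left]
    have h0 : ⟪ηv i, b x⟫ = 0 := by
      rw [← ContinuousLinearMap.adjoint_inner_left b x (ηv i), hb2 i, inner_zero_left]
    rw [h0, mul_zero]
  have hsplit := norm_sq_add_of_inner_zero hcross
  have hs2 : ‖∑ i, ⟪ξv i, x⟫ • ηv i‖^2 = ∑ i, ‖⟪ξv i, x⟫‖^2 := norm_sum_smul_sq hη _
  have hq2 : ‖q‖^2 = ∑ i, ‖⟪ξv i, x⟫‖^2 := norm_sum_smul_sq hξ _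
  have hxq := norm_proj_sq hξ x
  have hbx2 : ‖b x‖ ≤ ‖x - q‖ := by
    rw [hbx]
    calc ‖b (x - q)‖ ≤ ‖b‖ * ‖x - q‖ := b.le_opNorm _
      _ ≤ 1 * ‖x - q‖ := mul_le_mul_of_nonneg_right hbn (norm_nonneg _)
      _ = ‖x - q‖ := one_mul _
  have hfin : ‖∑ i, ⟪ξv i, x⟫ • ηv i + b x‖^2 ≤ ‖x‖^2 := by
    rw [hsplit, hs2]
    nlinarith [norm_nonneg (b x), norm_nonneg (x - q)]
  nlinarith [norm_nonneg (∑ i, ⟪ξv i, x⟫ • ηv i + b x), norm_nonneg x]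

/-- Decomposition of an element of the face `{x : ‖x‖ ≤ 1, x ξᵢ = ηᵢ}`. -/
lemma face_decomp (hξ : Orthonormal ℂ ξv) (hη : Orthonormal ℂ ηv)
    {x : H →L[ℂ] K} (hxn : ‖x‖ ≤ 1) (hxi : ∀ i, x (ξv i) = ηv i) :
    (∀ i, (x - ∑ i, rk1 (ηv i) (ξv i)) (ξv i) = 0) ∧
    (∀ i, ContinuousLinearMap.adjoint (x - ∑ i, rk1 (ηv i) (ξv i)) (ηv i) = 0) ∧
    ‖x - ∑ i, rk1 (ηv i) (ξv i)‖ ≤ 1 := by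
  set s := ∑ i, rk1 (ηv i) (ξv i) with hs
  have h1 : ∀ i, (x - s) (ξv i) = 0 := by
    intro i
    rw [ContinuousLinearMap.sub_apply, hxi i, hs, sum_rk1_apply_xi hξ, sub_self]
  have hadjx : ∀ i, ContinuousLinearMap.adjoint x (ηv i) = ξv i := by
    intro i
    apply eq_of_inner_one _ (hξ.1 i)
    · rw [ContinuousLinearMap.adjoint_inner_left, hxi i, inner_self_eq_norm_sq_to_K, hη.1 i]
      norm_num
    · calc ‖ContinuousLinearMap.adjoint x (ηv i)‖
          ≤ ‖ContinuousLinearMap.adjoint x‖ * ‖ηv i‖ :=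
            (ContinuousLinearMap.adjoint x).le_opNorm _
        _ ≤ 1 := by
            rw [hη.1 i, mul_one,
              LinearIsometryEquiv.norm_map ContinuousLinearMap.adjoint x]
            exact hxn
  have h2 : ∀ i, ContinuousLinearMap.adjoint (x - s) (ηv i) = 0 := by
    intro i
    rw [map_sub, ContinuousLinearMap.sub_apply, hadjx i, hs, sum_rk1_adjoint,
      sum_rk1_apply_xi hη, sub_self]
  refine ⟨h1, h2, ?_⟩
  refine ContinuousLinearMap.opNorm_le_bound _ zero_le_one fun z => ?_
  rw [one_mul]
  set q := ∑ i, ⟪ξv i, z⟫ • ξv i with hq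
  have hxsq : (x - s) q = 0 := by
    rw [hq, map_sum]
    exact Finset.sum_eq_zero fun i _ => by rw [map_smul, h1 i, smul_zero]
  have h3 : (x - s) z = (x - s) (z - q) := by rw [map_sub, hxsq, sub_zero]
  have hsr : s (z - q) = 0 := by
    rw [hs, sum_rk1_apply]
    refine Finset.sum_eq_zero fun i _ => ?_
    rw [hq, proj_inner_zero hξ z i, zero_smul]
  have h4 : (x - s) (z - q) = x (z - q) := by
    rw [ContinuousLinearMap.sub_apply, hsr, sub_zero]
  have h5 : ‖x (z - q)‖ ≤ ‖z - q‖ := by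
    calc ‖x (z - q)‖ ≤ ‖x‖ * ‖z - q‖ := x.le_opNorm _
      _ ≤ 1 * ‖z - q‖ := mul_le_mul_of_nonneg_right hxn (norm_nonneg _)
      _ = ‖z - q‖ := one_mul _
  have h6 : ‖z - q‖ ≤ ‖z‖ := by
    have := norm_proj_sq hξ z
    rw [← hq] at this
    nlinarith [norm_nonneg (z - q), norm_nonneg z, norm_nonneg q]
  rw [h3, h4]
  exact h5.trans h6

/-- Uniqueness of the center of a face. -/
lemma center_unique (hm : 0 < m) (hξ : Orthonormal ℂ ξv) (hη : Orthonormal ℂ ηv)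
    {b : H →L[ℂ] K} (hb1 : ∀ i, b (ξv i) = 0)
    (hb2 : ∀ i, ContinuousLinearMap.adjoint b (ηv i) = 0) (hbn : ‖b‖ ≤ 1)
    (hcenter : ∀ x : H →L[ℂ] K, IsCompactOperator x → ‖x‖ = 1 → (∀ i, x (ξv i) = ηv i) →
      ‖(∑ i, rk1 (ηv i) (ξv i)) + b - x‖ ≤ 1) : b = 0 := by
  by_contra hb0
  have hex : ∃ α₀, b α₀ ≠ 0 := by
    by_contra hall
    push_neg at hall
    exact hb0 (ContinuousLinearMap.ext fun z => by
      rw [hall z, ContinuousLinearMap.zero_apply])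
  obtain ⟨α₀, hα₀⟩ := hex
  set α₁ := α₀ - ∑ i, ⟪ξv i, α₀⟫ • ξv i with hα₁
  have hbα₁ : b α₁ = b α₀ := by
    rw [hα₁, map_sub, map_sum]
    have h0 : ∑ i, b (⟪ξv i, α₀⟫ • ξv i) = 0 :=
      Finset.sum_eq_zero fun i _ => by rw [map_smul, hb1 i, smul_zero]
    rw [h0, sub_zero]
  have hα₁0 : α₁ ≠ 0 := fun hh => hα₀ (by rw [← hbα₁, hh, map_zero])
  have hα₁pos : 0 < ‖α₁‖ := norm_pos_iff.mpr hα₁0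
  set α := ((‖α₁‖⁻¹ : ℝ) : ℂ) • α₁ with hα
  have hαn : ‖α‖ = 1 := by
    rw [hα, norm_smul, Complex.norm_real, norm_inv, norm_norm,
      inv_mul_cancel₀ (ne_of_gt hα₁pos)]
  have hαξ : ∀ i, ⟪ξv i, α⟫ = 0 := by
    intro i
    rw [hα, inner_smul_right, hα₁, proj_inner_zero hξ α₀ i, mul_zero]
  have hbα : b α ≠ 0 := by
    rw [hα, map_smul]
    refine smul_ne_zero ?_ (hbα₁ ▸ hα₀)
    simp only [ne_eq, Complex.ofReal_eq_zero, inv_eq_zero, norm_eq_zero]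
    exact hα₁0
  have hbαpos : 0 < ‖b α‖ := norm_pos_iff.mpr hbα
  set β : K := -(((‖b α‖⁻¹ : ℝ) : ℂ) • b α) with hβ
  have hβn : ‖β‖ = 1 := by
    rw [hβ, norm_neg, norm_smul, Complex.norm_real, norm_inv, norm_norm,
      inv_mul_cancel₀ (ne_of_gt hbαpos)]
  have hβη : ∀ i, ⟪ηv i, β⟫ = 0 := by
    intro i
    have h0 : ⟪ηv i, b α⟫ = 0 := by
      rw [← ContinuousLinearMap.adjoint_inner_left b α (ηv i), hb2 i, inner_zero_left]
    rw [hβ, inner_neg_right, inner_smul_right, h0, mul_zero, neg_zero]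
  set c := rk1 β α with hc
  have hcξ : ∀ i, c (ξv i) = 0 := by
    intro i
    rw [hc, rk1_apply]
    have h0 : ⟪α, ξv i⟫ = 0 := by
      rw [← inner_conj_symm (α) (ξv i), hαξ i, map_zero]
    rw [h0, zero_smul]
  have hcadj : ∀ i, ContinuousLinearMap.adjoint c (ηv i) = 0 := by
    intro i
    rw [hc, rk1_adjoint, rk1_apply]
    have h0 : ⟪β, ηv i⟫ = 0 := by
      rw [← inner_conj_symm (β) (ηv i), hβη i, map_zero]
    rw [h0, zero_smul]
  set x₂ := (∑ i, rk1 (ηv i) (ξv i)) + c with hx₂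
  have hx₂c : IsCompactOperator x₂ := by
    have hsum := sum_rk1_compact (ξv := ξv) (ηv := ηv)
    have h0 := hsum.add (rk1_compact β α)
    rw [hx₂]
    simpa [ContinuousLinearMap.coe_add'] using h0
  have hx₂i : ∀ i, x₂ (ξv i) = ηv i := by
    intro i
    rw [hx₂, ContinuousLinearMap.add_apply, sum_rk1_apply_xi hξ, hcξ i, add_zero]
  have hx₂n : ‖x₂‖ = 1 := by
    refine le_antisymm ?_ ?_
    · rw [hx₂]
      exact norm_sum_add_le hξ hη c hcξ hcadj (le_of_eq (rk1_norm hβn hαn))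
    · have h0 := x₂.unit_le_opNorm (ξv ⟨0, hm⟩) (le_of_eq (hξ.1 _))
      rw [hx₂i, hη.1 _] at h0
      exact h0
  have hdist := hcenter x₂ hx₂c hx₂n hx₂i
  have hsubx : (∑ i, rk1 (ηv i) (ξv i)) + b - x₂ = b - c := by rw [hx₂]; abel
  rw [hsubx] at hdist
  have hαα : ⟪α, α⟫ = (1:ℂ) := by
    rw [inner_self_eq_norm_sq_to_K, hαn]; norm_num
  have heval : (b - c) α = b α + ((‖b α‖⁻¹ : ℝ) : ℂ) • (b α) := by
    rw [ContinuousLinearMap.sub_apply, hc, rk1_apply, hαα, one_smul, hβ, sub_neg_eq_add]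
  have hnormeval : ‖(b - c) α‖ = ‖b α‖ + 1 := by
    rw [heval]
    have h0 : b α + ((‖b α‖⁻¹ : ℝ) : ℂ) • b α = ((1 + ‖b α‖⁻¹ : ℝ) : ℂ) • b α := by
      push_cast
      rw [add_smul, one_smul]
    rw [h0, norm_smul, Complex.norm_real, Real.norm_of_nonneg (by positivity)]
    field_simp
  have hle1 : ‖(b - c) α‖ ≤ 1 := by
    calc ‖(b - c) α‖ ≤ ‖b - c‖ * ‖α‖ := (b - c).le_opNorm _
      _ ≤ 1 := by rw [hαn, mul_one]; exact hdist
  rw [hnormeval] at hle1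
  linarith

end Family

/-! ### Distance two characterizations -/

lemma apply_eq_neg_of_dist_two {ξ : H} {η : K} (hξn : ‖ξ‖ = 1) (hηn : ‖η‖ = 1)
    {x : H →L[ℂ] K} (hxc : IsCompactOperator x) (hxn : ‖x‖ = 1)
    (h : ‖x - rk1 η ξ‖ = 2) : x ξ = -η := by
  obtain ⟨ζ, hζ1, hζ2, hζ3, hζ4⟩ :=
    dist_two_attain hxc (rk1_compact η ξ) hxn.le (le_of_eq (rk1_norm hηn hξn)) h
  rw [rk1_apply] at hζ3 hζ4
  have ht : ‖⟪ξ, ζ⟫‖ = 1 := by rwa [norm_smul, hηn, mul_one] at hζ3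
  have hcol := collinear_of_inner_one hξn hζ1 ht
  have ht0 : ⟪ξ, ζ⟫ ≠ 0 := by
    intro h'
    rw [h'] at ht
    simp at ht
  have h5 : ⟪ξ, ζ⟫ • x ξ = ⟪ξ, ζ⟫ • (-η) := by
    rw [← map_smul, ← hcol, hζ4, smul_neg]
  exact smul_right_injective K ht0 h5

lemma dist_two_of_apply_eq_neg {ξ : H} {η : K} (hξn : ‖ξ‖ = 1) (hηn : ‖η‖ = 1)
    {x : H →L[ℂ] K} (hxn : ‖x‖ = 1) (hxe : x ξ = -η) : ‖x - rk1 η ξ‖ = 2 := by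
  refine le_antisymm ?_ ?_
  · calc ‖x - rk1 η ξ‖ ≤ ‖x‖ + ‖rk1 η ξ‖ := norm_sub_le _ _
      _ = 2 := by rw [hxn, rk1_norm hηn hξn]; norm_num
  · have h1 : ‖(x - rk1 η ξ) ξ‖ ≤ ‖x - rk1 η ξ‖ :=
      (x - rk1 η ξ).unit_le_opNorm ξ hξn.le
    have hξξ : ⟪ξ, ξ⟫ = (1:ℂ) := by
      rw [inner_self_eq_norm_sq_to_K, hξn]; norm_num
    have h2 : (x - rk1 η ξ) ξ = (-2 : ℂ) • η := by
      rw [ContinuousLinearMap.sub_apply, hxe, rk1_apply, hξξ, one_smul]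
      module
    rw [h2, norm_smul, hηn, mul_one] at h1
    have hn2 : ‖(-2 : ℂ)‖ = 2 := by
      rw [norm_neg]
      simp
    rw [hn2] at h1
    exact h1

lemma eq_rk1_of_vanishing {v : H →L[ℂ] K} {ζ : H} (hζ : ‖ζ‖ = 1)
    (hv : ∀ α, ⟪ζ, α⟫ = 0 → v α = 0) : v = rk1 (v ζ) ζ := by
  ext x
  have h1 : ⟪ζ, x - ⟪ζ, x⟫ • ζ⟫ = 0 := by
    rw [inner_sub_right, inner_smul_right, inner_self_eq_norm_sq_to_K, hζ]
    push_cast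
    ring
  have h2 := hv _ h1
  rw [map_sub, map_smul, sub_eq_zero] at h2
  rw [rk1_apply, h2]

/-! ### Metric characterization of rank-one partial isometries -/

lemma rankone_of_center {u v : H →L[ℂ] K}
    (huc : IsCompactOperator u) (hun : ‖u‖ = 1)
    (hvc : IsCompactOperator v) (hvn : ‖v‖ = 1)
    (huv : ‖u - v‖ = 2)
    (h1 : ∀ w : H →L[ℂ] K, IsCompactOperator w → ‖w‖ = 1 → ‖w - u‖ = 2 → ‖v - w‖ ≤ 1) :
    ∃ ζ₀ : H, ‖ζ₀‖ = 1 ∧ ‖u ζ₀‖ = 1 ∧ v = -(rk1 (u ζ₀) ζ₀) := by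
  obtain ⟨ζ₀, hζn, hunorm, hvnorm, huv0⟩ := dist_two_attain huc hvc hun.le hvn.le huv
  set η₀ := u ζ₀ with hη₀
  have hηn : ‖η₀‖ = 1 := hunorm
  have hvζ : v ζ₀ = -η₀ := by rw [huv0, neg_neg]
  have hvanish : ∀ α, ⟪ζ₀, α⟫ = 0 → v α = 0 := by
    intro α hα
    rcases eq_or_ne α 0 with rfl | hα0
    · exact map_zero v
    have hαpos : 0 < ‖α‖ := norm_pos_iff.mpr hα0
    set α' := ((‖α‖⁻¹ : ℝ) : ℂ) • α with hα'
    have hα'n : ‖α'‖ = 1 := by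
      rw [hα', norm_smul, Complex.norm_real, norm_inv, norm_norm,
        inv_mul_cancel₀ (ne_of_gt hαpos)]
    have hα'ζ : ⟪ζ₀, α'⟫ = 0 := by rw [hα', inner_smul_right, hα, mul_zero]
    suffices hv' : v α' = 0 by
      have hsc : ((‖α‖ : ℝ) : ℂ) • v α' = v α := by
        rw [hα', map_smul, smul_smul]
        have : ((‖α‖ : ℝ) : ℂ) * ((‖α‖⁻¹ : ℝ) : ℂ) = 1 := by
          rw [← Complex.ofReal_mul, mul_inv_cancel₀ (ne_of_gt hαpos), Complex.ofReal_one]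
        rw [this, one_smul]
      rw [← hsc, hv', smul_zero]
    by_cases hK1 : ∀ y : K, ⟪η₀, y⟫ = 0 → y = 0
    · -- essentially one-dimensional target
      have hδ : ContinuousLinearMap.adjoint v η₀ = -ζ₀ := by
        have hneg : -(ContinuousLinearMap.adjoint v η₀) = ζ₀ := by
          refine eq_of_inner_one ?_ hζn ?_
          · rw [norm_neg]
            calc ‖ContinuousLinearMap.adjoint v η₀‖
                ≤ ‖ContinuousLinearMap.adjoint v‖ * ‖η₀‖ :=
                  (ContinuousLinearMap.adjoint v).le_opNorm _
              _ = 1 := by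
                  rw [hηn, mul_one,
                    LinearIsometryEquiv.norm_map ContinuousLinearMap.adjoint v, hvn]
          · rw [inner_neg_left, ContinuousLinearMap.adjoint_inner_left, hvζ,
              inner_neg_right, inner_self_eq_norm_sq_to_K, hηn]
            norm_num
        rw [← hneg, neg_neg]
      have hcoef : ⟪η₀, v α'⟫ = 0 := by
        rw [← ContinuousLinearMap.adjoint_inner_left v α' η₀, hδ, inner_neg_left, hα'ζ,
          neg_zero]
      have hy : v α' - ⟪η₀, v α'⟫ • η₀ = 0 := by
        apply hK1
        rw [inner_sub_right, inner_smul_right, inner_self_eq_norm_sq_to_K, hηn]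
        push_cast
        ring
      have h5 := sub_eq_zero.mp hy
      rw [hcoef, zero_smul] at h5
      exact h5
    · push_neg at hK1
      obtain ⟨y, hyη, hy0⟩ := hK1
      have hypos : 0 < ‖y‖ := norm_pos_iff.mpr hy0
      set β := ((‖y‖⁻¹ : ℝ) : ℂ) • y with hβ
      have hβn : ‖β‖ = 1 := by
        rw [hβ, norm_smul, Complex.norm_real, norm_inv, norm_norm,
          inv_mul_cancel₀ (ne_of_gt hypos)]
      have hβη : ⟪η₀, β⟫ = 0 := by rw [hβ, inner_smul_right, hyη, mul_zero]
      have hα'α' : ⟪α', α'⟫ = (1:ℂ) := by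
        rw [inner_self_eq_norm_sq_to_K, hα'n]; norm_num
      have hζζ : ⟪ζ₀, ζ₀⟫ = (1:ℂ) := by
        rw [inner_self_eq_norm_sq_to_K, hζn]; norm_num
      have key : ∀ σ : ℂ, ‖σ‖ = 1 → ‖v α' - σ • β‖ ≤ 1 := by
        intro σ hσ
        have hb1 : ∀ i : Fin 1, (rk1 (σ • β) α') ((fun _ : Fin 1 => ζ₀) i) = 0 := by
          intro i
          rw [rk1_apply]
          have h0 : ⟪α', ζ₀⟫ = 0 := by
            rw [← inner_conj_symm α' ζ₀, hα'ζ, map_zero]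
          rw [h0, zero_smul]
        have hb2 : ∀ i : Fin 1,
            ContinuousLinearMap.adjoint (rk1 (σ • β) α') ((fun _ : Fin 1 => -η₀) i) = 0 := by
          intro i
          rw [rk1_adjoint, rk1_apply]
          have h0 : ⟪σ • β, -η₀⟫ = 0 := by
            rw [inner_neg_right, inner_smul_left]
            have : ⟪β, η₀⟫ = 0 := by rw [← inner_conj_symm β η₀, hβη, map_zero]
            rw [this, mul_zero, neg_zero]
          rw [h0, zero_smul]
        have hbn' : ‖rk1 (σ • β) α'‖ ≤ 1 :=
          le_of_eq (rk1_norm (by rw [norm_smul, hσ, hβn, mul_one]) hα'n)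
        have hA := norm_sum_add_le (orthonormal_single hζn)
          (orthonormal_single (by rw [norm_neg]; exact hηn)) _ hb1 hb2 hbn'
        rw [Fin.sum_univ_one, rk1_neg] at hA
        set w := -(rk1 η₀ ζ₀) + rk1 (σ • β) α' with hw
        have hwζ : w ζ₀ = -η₀ := by
          rw [hw, ContinuousLinearMap.add_apply, ContinuousLinearMap.neg_apply,
            rk1_apply, rk1_apply, hζζ, one_smul]
          have h0 : ⟪α', ζ₀⟫ = 0 := by
            rw [← inner_conj_symm α' ζ₀, hα'ζ, map_zero]
          rw [h0, zero_smul, add_zero]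
        have hwn : ‖w‖ = 1 := by
          refine le_antisymm hA ?_
          have h0 := w.unit_le_opNorm ζ₀ hζn.le
          rw [hwζ, norm_neg, hηn] at h0
          exact h0
        have hwc : IsCompactOperator w := by
          have haddc := (compact_clm_neg (rk1_compact η₀ ζ₀)).add
            (rk1_compact (σ • β) α')
          rw [hw]
          simpa [ContinuousLinearMap.coe_add'] using haddc
        have hwu : ‖w - u‖ = 2 := by
          refine le_antisymm ?_ ?_
          · calc ‖w - u‖ ≤ ‖w‖ + ‖u‖ := norm_sub_le _ _
              _ = 2 := by rw [hwn, hun]; norm_num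
          · have h0 := (w - u).unit_le_opNorm ζ₀ hζn.le
            have h1' : (w - u) ζ₀ = (-2 : ℂ) • η₀ := by
              rw [ContinuousLinearMap.sub_apply, hwζ, ← hη₀]
              module
            rw [h1', norm_smul, hηn, mul_one] at h0
            have h2' : ‖(-2 : ℂ)‖ = 2 := by rw [norm_neg]; simp
            rw [h2'] at h0
            exact h0
        have hvw := h1 w hwc hwn hwu
        have h3 := (v - w).unit_le_opNorm α' hα'n.le
        have h4 : (v - w) α' = v α' - σ • β := by
          rw [ContinuousLinearMap.sub_apply, hw, ContinuousLinearMap.add_apply,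
            ContinuousLinearMap.neg_apply, rk1_apply, rk1_apply, hα'ζ, zero_smul,
            neg_zero, zero_add, hα'α', one_smul]
        rw [h4] at h3
        exact h3.trans hvw
      have hp1 := key 1 (by norm_num)
      have hp2 := key (-1) (by norm_num)
      rw [one_smul] at hp1
      rw [neg_one_smul, sub_neg_eq_add] at hp2
      exact zero_of_close_pm hβn hp1 hp2
  have hform := eq_rk1_of_vanishing hζn hvanish
  refine ⟨ζ₀, hζn, hunorm, ?_⟩
  rw [hform, hvζ, ← hη₀, rk1_neg]

lemma rankone_pair {u v : H →L[ℂ] K}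
    (huc : IsCompactOperator u) (hun : ‖u‖ = 1)
    (hvc : IsCompactOperator v) (hvn : ‖v‖ = 1)
    (huv : ‖u - v‖ = 2)
    (h1 : ∀ w : H →L[ℂ] K, IsCompactOperator w → ‖w‖ = 1 → ‖w - u‖ = 2 → ‖v - w‖ ≤ 1)
    (h2 : ∀ w : H →L[ℂ] K, IsCompactOperator w → ‖w‖ = 1 → ‖w - v‖ = 2 → ‖u - w‖ ≤ 1) :
    (∃ ξ' : H, ∃ η' : K, ‖ξ'‖ = 1 ∧ ‖η'‖ = 1 ∧ u = rk1 η' ξ') ∧ v = -u := by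
  obtain ⟨ζ₀, hζ₀n, huζ₀, hvform⟩ := rankone_of_center huc hun hvc hvn huv h1
  obtain ⟨ζ₁, hζ₁n, hvζ₁, huform⟩ :=
    rankone_of_center hvc hvn huc hun (by rwa [norm_sub_rev]) h2
  have hζ₁ζ₁ : ⟪ζ₁, ζ₁⟫ = (1:ℂ) := by
    rw [inner_self_eq_norm_sq_to_K, hζ₁n]; norm_num
  have huζ₁ : u ζ₁ = -(v ζ₁) := by
    rw [huform, ContinuousLinearMap.neg_apply, rk1_apply, hζ₁ζ₁, one_smul]
  refine ⟨⟨ζ₁, -(v ζ₁), hζ₁n, by rw [norm_neg]; exact hvζ₁, by rw [huform, ← rk1_neg]⟩, ?_⟩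
  have hteq : u ζ₀ = -(⟪ζ₁, ζ₀⟫ • v ζ₁) := by
    rw [huform, ContinuousLinearMap.neg_apply, rk1_apply]
  have htn : ‖⟪ζ₁, ζ₀⟫‖ = 1 := by
    have h0 : ‖u ζ₀‖ = ‖⟪ζ₁, ζ₀⟫‖ * ‖v ζ₁‖ := by rw [hteq, norm_neg, norm_smul]
    rw [huζ₀, hvζ₁, mul_one] at h0
    exact h0.symm
  have hcol := collinear_of_inner_one hζ₁n hζ₀n htn
  have hkey : rk1 (u ζ₀) ζ₀ = rk1 (u ζ₁) ζ₁ := by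
    ext x
    rw [rk1_apply, rk1_apply]
    conv_lhs => rw [hcol]
    rw [inner_smul_left, map_smul, smul_smul]
    congr 1
    have hconj : (starRingEnd ℂ) ⟪ζ₁, ζ₀⟫ * ⟪ζ₁, ζ₀⟫ = 1 := by
      rw [RCLike.conj_mul, htn]
      norm_num
    rw [mul_comm ((starRingEnd ℂ) ⟪ζ₁, ζ₀⟫) ⟪ζ₁, x⟫, mul_assoc, hconj, mul_one]
  have hvu : v = -(rk1 (u ζ₁) ζ₁) := by rw [hvform, hkey]
  rw [hvu, huζ₁, rk1_neg, neg_neg, huform, neg_neg]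

/-! ### Algebraic lemmas on rank-one partial isometries -/

lemma norm_eq_one_of_inner_self {E : Type*} [NormedAddCommGroup E] [InnerProductSpace ℂ E]
    {x : E} (h : ⟪x, x⟫ = (1:ℂ)) : ‖x‖ = 1 := by
  have h1 := inner_self_eq_norm_sq (𝕜 := ℂ) x
  rw [h, RCLike.one_re] at h1
  nlinarith [norm_nonneg x]

lemma rk1_isPartialIsom {ξ : H} {η : K} (hξ : ‖ξ‖ = 1) (hη : ‖η‖ = 1) :
    IsPartialIsom (rk1 η ξ) := by
  have hξξ : ⟪ξ, ξ⟫ = (1:ℂ) := by rw [inner_self_eq_norm_sq_to_K, hξ]; norm_num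
  have hηη : ⟪η, η⟫ = (1:ℂ) := by rw [inner_self_eq_norm_sq_to_K, hη]; norm_num
  unfold IsPartialIsom
  rw [rk1_adjoint]
  ext x
  simp only [ContinuousLinearMap.comp_apply, rk1_apply, inner_smul_right, hξξ, hηη,
    mul_one, one_smul]

lemma rk1_finrank_one {ξ : H} {η : K} (hξ : ‖ξ‖ = 1) (hη0 : η ≠ 0) :
    Module.finrank ℂ (LinearMap.range (rk1 η ξ : H →ₗ[ℂ] K)) = 1 := by
  have hξξ : ⟪ξ, ξ⟫ = (1:ℂ) := by rw [inner_self_eq_norm_sq_to_K, hξ]; norm_num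
  have hr : LinearMap.range (rk1 η ξ : H →ₗ[ℂ] K) = Submodule.span ℂ {η} := by
    apply le_antisymm
    · rintro y hy
      obtain ⟨x, rfl⟩ := LinearMap.mem_range.mp hy
      exact Submodule.smul_mem _ _ (Submodule.mem_span_singleton_self η)
    · rw [Submodule.span_singleton_le_iff_mem]
      exact ⟨ξ, by rw [ContinuousLinearMap.coe_coe, rk1_apply, hξξ, one_smul]⟩
  rw [hr]
  exact finrank_span_singleton hη0

lemma rk1_orthogonalOps {ξa ξb : H} {ηa ηb : K} (hξ : ⟪ξa, ξb⟫ = 0) (hη : ⟪ηa, ηb⟫ = 0) :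
    OrthogonalOps (rk1 ηa ξa) (rk1 ηb ξb) := by
  have hη' : ⟪ηb, ηa⟫ = 0 := by rw [← inner_conj_symm ηb ηa, hη, map_zero]
  constructor
  · ext y
    simp only [ContinuousLinearMap.comp_apply, ContinuousLinearMap.zero_apply,
      rk1_adjoint, rk1_apply, inner_smul_right, hξ, mul_zero, zero_smul, smul_zero]
  · ext x
    simp only [ContinuousLinearMap.comp_apply, ContinuousLinearMap.zero_apply,
      rk1_adjoint, rk1_apply, inner_smul_right, hη', mul_zero, zero_smul, smul_zero]

lemma inner_eq_zero_of_orthogonalOps {ξa ξb : H} {ηa ηb : K}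
    (hξa : ξa ≠ 0) (hξb : ξb ≠ 0) (hηa : ηa ≠ 0) (hηb : ηb ≠ 0)
    (h : OrthogonalOps (rk1 ηa ξa) (rk1 ηb ξb)) : ⟪ξa, ξb⟫ = 0 ∧ ⟪ηa, ηb⟫ = 0 := by
  constructor
  · have h1 := congrArg (fun T : K →L[ℂ] K => T ηb) h.1
    simp only [ContinuousLinearMap.comp_apply, ContinuousLinearMap.zero_apply,
      rk1_adjoint, rk1_apply, inner_smul_right] at h1
    rcases smul_eq_zero.mp h1 with hc | h3
    · rcases mul_eq_zero.mp hc with hc1 | hc2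
      · exact absurd hc1 (fun hh => hηb (inner_self_eq_zero.mp hh))
      · exact hc2
    · exact absurd h3 hηa
  · have h1 := congrArg (fun T : H →L[ℂ] H => T ξa) h.2
    simp only [ContinuousLinearMap.comp_apply, ContinuousLinearMap.zero_apply,
      rk1_adjoint, rk1_apply, inner_smul_right] at h1
    rcases smul_eq_zero.mp h1 with hc | h3
    · rcases mul_eq_zero.mp hc with hc1 | hc2
      · exact absurd hc1 (fun hh => hξa (inner_self_eq_zero.mp hh))
      · rw [← inner_conj_symm ηa ηb, hc2, map_zero]
    · exact absurd h3 hξb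

lemma rankone_form {e : H →L[ℂ] K} (hpi : IsPartialIsom e)
    (hr : Module.finrank ℂ (LinearMap.range (e : H →ₗ[ℂ] K)) = 1) :
    ∃ ξ : H, ∃ η : K, ‖ξ‖ = 1 ∧ ‖η‖ = 1 ∧ e = rk1 η ξ := by
  have hfix : ∀ z : H, e (ContinuousLinearMap.adjoint e (e z)) = e z := by
    intro z
    have h0 := ContinuousLinearMap.ext_iff.mp hpi z
    simpa only [ContinuousLinearMap.comp_apply] using h0
  obtain ⟨v, hv0, hvspan⟩ := finrank_eq_one_iff'.mp hr
  set η₀ : K := (v : K) with hη₀def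
  have hη₀mem : η₀ ∈ LinearMap.range (e : H →ₗ[ℂ] K) := v.2
  have hη₀0 : η₀ ≠ 0 := by
    simp only [hη₀def, ne_eq, ZeroMemClass.coe_eq_zero]
    exact hv0
  have hη₀pos : 0 < ‖η₀‖ := norm_pos_iff.mpr hη₀0
  set η : K := ((‖η₀‖⁻¹ : ℝ) : ℂ) • η₀ with hηdef
  have hηn : ‖η‖ = 1 := by
    rw [hηdef, norm_smul, Complex.norm_real, norm_inv, norm_norm,
      inv_mul_cancel₀ (ne_of_gt hη₀pos)]
  have hηmem : η ∈ LinearMap.range (e : H →ₗ[ℂ] K) := Submodule.smul_mem _ _ hη₀mem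
  have hηfix : e (ContinuousLinearMap.adjoint e η) = η := by
    obtain ⟨z, hz⟩ := hηmem
    rw [← hz, ContinuousLinearMap.coe_coe, hfix]
  have hηη : ⟪η, η⟫ = (1:ℂ) := by rw [inner_self_eq_norm_sq_to_K, hηn]; norm_num
  set ξ : H := ContinuousLinearMap.adjoint e η with hξdef
  have hξξ : ⟪ξ, ξ⟫ = (1:ℂ) := by
    rw [hξdef, ContinuousLinearMap.adjoint_inner_left, hηfix, hηη]
  have hξn : ‖ξ‖ = 1 := norm_eq_one_of_inner_self hξξ
  refine ⟨ξ, η, hξn, hηn, ?_⟩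
  ext x
  rw [rk1_apply]
  have hcoord : ⟪ξ, x⟫ = ⟪η, e x⟫ := by
    rw [hξdef, ContinuousLinearMap.adjoint_inner_left]
  obtain ⟨c, hc⟩ := hvspan ⟨e x, LinearMap.mem_range_self (e : H →ₗ[ℂ] K) x⟩
  have hc' : c • η₀ = e x := by
    have := congrArg (Subtype.val) hc
    simpa [hη₀def] using this
  have hd : e x = (c * ((‖η₀‖ : ℝ) : ℂ)) • η := by
    rw [hηdef, smul_smul, mul_assoc]
    have hcanc : ((‖η₀‖ : ℝ) : ℂ) * ((‖η₀‖⁻¹ : ℝ) : ℂ) = 1 := by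
      rw [← Complex.ofReal_mul, mul_inv_cancel₀ (ne_of_gt hη₀pos), Complex.ofReal_one]
    rw [hcanc, mul_one, hc']
  rw [hcoord, hd, inner_smul_right, hηη, mul_one]

/-- Decomposition of a finite-rank partial isometry as a sum of rank-one pieces with
orthonormal data. -/
lemma pi_decomp {e : H →L[ℂ] K} (hpi : IsPartialIsom e)
    (hfd : FiniteDimensional ℂ (LinearMap.range (e : H →ₗ[ℂ] K))) (hne : e ≠ 0) :
    ∃ n : ℕ, 0 < n ∧ ∃ ξv : Fin n → H, ∃ ηv : Fin n → K,
      Orthonormal ℂ ξv ∧ Orthonormal ℂ ηv ∧ e = ∑ i, rk1 (ηv i) (ξv i) := by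
  classical
  haveI := hfd
  have hfix : ∀ z : H, e (ContinuousLinearMap.adjoint e (e z)) = e z := by
    intro z
    have h0 := ContinuousLinearMap.ext_iff.mp hpi z
    simpa only [ContinuousLinearMap.comp_apply] using h0
  have hfix' : ∀ y : K, y ∈ LinearMap.range (e : H →ₗ[ℂ] K) →
      e (ContinuousLinearMap.adjoint e y) = y := by
    intro y hy
    obtain ⟨z, rfl⟩ := LinearMap.mem_range.mp hy
    exact hfix z
  have hnt : Nontrivial (LinearMap.range (e : H →ₗ[ℂ] K)) := by
    obtain ⟨x, hx⟩ : ∃ x, e x ≠ 0 := by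
      by_contra hall
      push_neg at hall
      exact hne (ContinuousLinearMap.ext fun z => by
        rw [hall z, ContinuousLinearMap.zero_apply])
    refine ⟨⟨e x, LinearMap.mem_range_self (e : H →ₗ[ℂ] K) x⟩, 0, fun hh => hx ?_⟩
    simpa using congrArg Subtype.val hh
  haveI := hnt
  set b := stdOrthonormalBasis ℂ (LinearMap.range (e : H →ₗ[ℂ] K)) with hbdef
  refine ⟨Module.finrank ℂ (LinearMap.range (e : H →ₗ[ℂ] K)), Module.finrank_pos,
    fun i => ContinuousLinearMap.adjoint e ((b i : LinearMap.range (e : H →ₗ[ℂ] K)) : K),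
    fun i => ((b i : LinearMap.range (e : H →ₗ[ℂ] K)) : K), ?_, ?_, ?_⟩
  · -- ξ orthonormal
    have hmem : ∀ i, ((b i : LinearMap.range (e : H →ₗ[ℂ] K)) : K) ∈ LinearMap.range (e : H →ₗ[ℂ] K) := fun i => (b i).2
    have hinner : ∀ i j, ⟪ContinuousLinearMap.adjoint e ((b i : LinearMap.range (e : H →ₗ[ℂ] K)) : K),
        ContinuousLinearMap.adjoint e ((b j : LinearMap.range (e : H →ₗ[ℂ] K)) : K)⟫ =
        ⟪((b i : LinearMap.range (e : H →ₗ[ℂ] K)) : K), ((b j : LinearMap.range (e : H →ₗ[ℂ] K)) : K)⟫ := by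
      intro i j
      rw [ContinuousLinearMap.adjoint_inner_left, hfix' _ (hmem j)]
    constructor
    · intro i
      apply norm_eq_one_of_inner_self
      rw [hinner i i, ← Submodule.coe_inner]
      have h1 := b.orthonormal.1 i
      rw [inner_self_eq_norm_sq_to_K, h1]
      norm_num
    · intro i j hij
      rw [hinner i j, ← Submodule.coe_inner]
      exact b.orthonormal.2 hij
  · -- η orthonormal
    constructor
    · intro i
      have h1 := b.orthonormal.1 i
      exact h1
    · intro i j hij
      have h2 := b.orthonormal.2 hij
      rw [← Submodule.coe_inner]
      exact h2
  · -- decomposition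
    ext x
    rw [sum_rk1_apply]
    have hw := b.sum_repr' (⟨e x, LinearMap.mem_range_self (e : H →ₗ[ℂ] K) x⟩ : LinearMap.range (e : H →ₗ[ℂ] K))
    have hcoe := congrArg Subtype.val hw
    simp only [AddSubmonoidClass.coe_finset_sum, SetLike.val_smul, Submodule.coe_inner] at hcoe
    calc e x = ∑ i, ⟪((b i : LinearMap.range (e : H →ₗ[ℂ] K)) : K), e x⟫ • ((b i : LinearMap.range (e : H →ₗ[ℂ] K)) : K) :=
          hcoe.symm
      _ = ∑ i, ⟪ContinuousLinearMap.adjoint e ((b i : LinearMap.range (e : H →ₗ[ℂ] K)) : K), x⟫ •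
            ((b i : LinearMap.range (e : H →ₗ[ℂ] K)) : K) := by
          refine Finset.sum_congr rfl fun i _ => ?_
          rw [ContinuousLinearMap.adjoint_inner_left]

/-- If `x` is at distance 2 from the rank-one partial isometry `rk1 η ξ`, then it is within
distance 1 of `-(rk1 η ξ)`. -/
lemma dist_center_bound {ξ : H} {η : K} (hξn : ‖ξ‖ = 1) (hηn : ‖η‖ = 1)
    {x : H →L[ℂ] K} (hxc : IsCompactOperator x) (hxn : ‖x‖ = 1)
    (h : ‖x - rk1 η ξ‖ = 2) : ‖-(rk1 η ξ) - x‖ ≤ 1 := by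
  have hxξ := apply_eq_neg_of_dist_two hξn hηn hxc hxn h
  have hd := face_decomp (m := 1) (ξv := fun _ => ξ) (ηv := fun _ => -η)
      (orthonormal_single hξn) (orthonormal_single (by rw [norm_neg]; exact hηn)) hxn.le
      (fun _ => hxξ)
  have h2 := hd.2.2
  rw [Fin.sum_univ_one, rk1_neg] at h2
  rw [norm_sub_rev]
  exact h2

section Transport

variable {H₁ K₁ H₂ K₂ : Type*}
  [NormedAddCommGroup H₁] [InnerProductSpace ℂ H₁] [CompleteSpace H₁]
  [NormedAddCommGroup K₁] [InnerProductSpace ℂ K₁] [CompleteSpace K₁]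
  [NormedAddCommGroup H₂] [InnerProductSpace ℂ H₂] [CompleteSpace H₂]
  [NormedAddCommGroup K₂] [InnerProductSpace ℂ K₂] [CompleteSpace K₂]
  (f : (H₁ →L[ℂ] K₁) → (H₂ →L[ℂ] K₂))
  (hmap : ∀ x : H₁ →L[ℂ] K₁, IsCompactOperator x → ‖x‖ = 1 →
    IsCompactOperator (f x) ∧ ‖f x‖ = 1)
  (hsurj : ∀ y : H₂ →L[ℂ] K₂, IsCompactOperator y → ‖y‖ = 1 →
    ∃ x : H₁ →L[ℂ] K₁, IsCompactOperator x ∧ ‖x‖ = 1 ∧ f x = y)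
  (hiso : ∀ x y : H₁ →L[ℂ] K₁, IsCompactOperator x → ‖x‖ = 1 →
    IsCompactOperator y → ‖y‖ = 1 → ‖f x - f y‖ = ‖x - y‖)

include hmap hsurj hiso in
/-- `f` sends rank-one partial isometries to rank-one partial isometries and commutes with
negation on them. -/
lemma f_rankone {ξ : H₁} {η : K₁} (hξn : ‖ξ‖ = 1) (hηn : ‖η‖ = 1) :
    (∃ ξ' : H₂, ∃ η' : K₂, ‖ξ'‖ = 1 ∧ ‖η'‖ = 1 ∧ f (rk1 η ξ) = rk1 η' ξ') ∧
      f (-(rk1 η ξ)) = -(f (rk1 η ξ)) := by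
  have hec : IsCompactOperator (rk1 η ξ) := rk1_compact η ξ
  have hen : ‖rk1 η ξ‖ = 1 := rk1_norm hηn hξn
  have henc : IsCompactOperator (-(rk1 η ξ)) := compact_clm_neg hec
  have henn : ‖-(rk1 η ξ)‖ = 1 := by rw [norm_neg]; exact hen
  obtain ⟨huc, hun⟩ := hmap _ hec hen
  obtain ⟨hvc, hvn⟩ := hmap _ henc henn
  have huv : ‖f (rk1 η ξ) - f (-(rk1 η ξ))‖ = 2 := by
    rw [hiso _ _ hec hen henc henn, sub_neg_eq_add, ← two_smul ℂ (rk1 η ξ), norm_smul, hen]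
    simp
  have h1 : ∀ w : H₂ →L[ℂ] K₂, IsCompactOperator w → ‖w‖ = 1 → ‖w - f (rk1 η ξ)‖ = 2 →
      ‖f (-(rk1 η ξ)) - w‖ ≤ 1 := by
    intro w hwc hwn hw2
    obtain ⟨x, hxc, hxn, rfl⟩ := hsurj w hwc hwn
    have hx2 : ‖x - rk1 η ξ‖ = 2 := by
      rw [← hiso x _ hxc hxn hec hen]
      exact hw2
    have hb := dist_center_bound hξn hηn hxc hxn hx2
    rw [hiso _ x henc henn hxc hxn]
    exact hb
  have h2 : ∀ w : H₂ →L[ℂ] K₂, IsCompactOperator w → ‖w‖ = 1 → ‖w - f (-(rk1 η ξ))‖ = 2 →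
      ‖f (rk1 η ξ) - w‖ ≤ 1 := by
    intro w hwc hwn hw2
    obtain ⟨x, hxc, hxn, rfl⟩ := hsurj w hwc hwn
    have hx2 : ‖x - rk1 (-η) ξ‖ = 2 := by
      rw [rk1_neg, ← hiso x _ hxc hxn henc henn]
      exact hw2
    have hb := dist_center_bound hξn (by rw [norm_neg]; exact hηn) hxc hxn hx2
    rw [rk1_neg, neg_neg] at hb
    rw [hiso _ x hec hen hxc hxn]
    exact hb
  exact rankone_pair huc hun hvc hvn huv h1 h2

include hmap hsurj hiso in
/-- Additivity of `f` on sums of orthogonal rank-one partial isometries (negative form). -/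
lemma f_sum {m : ℕ} (hm : 0 < m)
    {ξv : Fin m → H₁} {ηv : Fin m → K₁} {ξ'v : Fin m → H₂} {η'v : Fin m → K₂}
    (hξ : Orthonormal ℂ ξv) (hη : Orthonormal ℂ ηv)
    (hξ' : Orthonormal ℂ ξ'v) (hη' : Orthonormal ℂ η'v)
    (hfe : ∀ i, f (rk1 (ηv i) (ξv i)) = rk1 (η'v i) (ξ'v i)) :
    f (-(∑ i, rk1 (ηv i) (ξv i))) = -(∑ i, rk1 (η'v i) (ξ'v i)) := by
  have hsXc : IsCompactOperator ((∑ i, rk1 (ηv i) (ξv i) : H₁ →L[ℂ] K₁)) := sum_rk1_compact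
  have hsXn : ‖∑ i, rk1 (ηv i) (ξv i)‖ = 1 := by
    refine le_antisymm ?_ ?_
    · have h0 := norm_sum_add_le hξ hη 0 (fun i => rfl) (fun i => by rw [map_zero]; rfl)
        (by rw [norm_zero]; norm_num)
      rwa [add_zero] at h0
    · have h0 := (∑ i, rk1 (ηv i) (ξv i)).unit_le_opNorm (ξv ⟨0, hm⟩)
        (le_of_eq (hξ.1 _))
      rw [sum_rk1_apply_xi hξ, hη.1 _] at h0
      exact h0
  have hmsXc : IsCompactOperator ((-(∑ i, rk1 (ηv i) (ξv i)) : H₁ →L[ℂ] K₁)) := compact_clm_neg hsXc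
  have hmsXn : ‖-(∑ i, rk1 (ηv i) (ξv i))‖ = 1 := by rw [norm_neg]; exact hsXn
  obtain ⟨hzc, hzn⟩ := hmap _ hmsXc hmsXn
  have heic : ∀ i, IsCompactOperator (rk1 (ηv i) (ξv i)) := fun i => rk1_compact _ _
  have hein : ∀ i, ‖rk1 (ηv i) (ξv i)‖ = 1 := fun i => rk1_norm (hη.1 i) (hξ.1 i)
  have hdistX : ∀ i, ‖-(∑ j, rk1 (ηv j) (ξv j)) - rk1 (ηv i) (ξv i)‖ = 2 := by
    intro i
    refine le_antisymm ?_ ?_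
    · calc ‖-(∑ j, rk1 (ηv j) (ξv j)) - rk1 (ηv i) (ξv i)‖
          ≤ ‖-(∑ j, rk1 (ηv j) (ξv j))‖ + ‖rk1 (ηv i) (ξv i)‖ := norm_sub_le _ _
        _ = 2 := by rw [hmsXn, hein i]; norm_num
    · have h0 := (-(∑ j, rk1 (ηv j) (ξv j)) - rk1 (ηv i) (ξv i)).unit_le_opNorm (ξv i)
        (le_of_eq (hξ.1 i))
      have hii : ⟪ξv i, ξv i⟫ = (1:ℂ) := by
        rw [inner_self_eq_norm_sq_to_K, hξ.1 i]; norm_num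
      have h1 : (-(∑ j, rk1 (ηv j) (ξv j)) - rk1 (ηv i) (ξv i)) (ξv i) = (-2 : ℂ) • ηv i := by
        rw [ContinuousLinearMap.sub_apply, ContinuousLinearMap.neg_apply,
          sum_rk1_apply_xi hξ, rk1_apply, hii, one_smul]
        module
      rw [h1, norm_smul, hη.1 i, mul_one] at h0
      have h2 : ‖(-2 : ℂ)‖ = 2 := by rw [norm_neg]; simp
      rw [h2] at h0
      exact h0
  have hdist2 : ∀ i, ‖f (-(∑ j, rk1 (ηv j) (ξv j))) - rk1 (η'v i) (ξ'v i)‖ = 2 := by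
    intro i
    rw [← hfe i, hiso _ _ hmsXc hmsXn (heic i) (hein i)]
    exact hdistX i
  have hzxi : ∀ i, f (-(∑ j, rk1 (ηv j) (ξv j))) (ξ'v i) = -(η'v i) :=
    fun i => apply_eq_neg_of_dist_two (hξ'.1 i) (hη'.1 i) hzc hzn (hdist2 i)
  have hη'neg : Orthonormal ℂ (fun i => -(η'v i)) := orthonormal_neg hη'
  have hd := face_decomp hξ' hη'neg (x := f (-(∑ j, rk1 (ηv j) (ξv j)))) hzn.le hzxi
  have hcenter : ∀ x : H₂ →L[ℂ] K₂, IsCompactOperator x → ‖x‖ = 1 →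
      (∀ i, x (ξ'v i) = -(η'v i)) →
      ‖(∑ i, rk1 (-(η'v i)) (ξ'v i)) +
        (f (-(∑ j, rk1 (ηv j) (ξv j))) - ∑ i, rk1 (-(η'v i)) (ξ'v i)) - x‖ ≤ 1 := by
    intro x hxc hxn hxi
    have hrw : (∑ i, rk1 (-(η'v i)) (ξ'v i)) +
        (f (-(∑ j, rk1 (ηv j) (ξv j))) - ∑ i, rk1 (-(η'v i)) (ξ'v i)) - x =
        f (-(∑ j, rk1 (ηv j) (ξv j))) - x := by abel
    rw [hrw]
    obtain ⟨x₀, hx₀c, hx₀n, rfl⟩ := hsurj x hxc hxn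
    rw [hiso _ x₀ hmsXc hmsXn hx₀c hx₀n]
    have hx₀dist : ∀ i, ‖x₀ - rk1 (ηv i) (ξv i)‖ = 2 := by
      intro i
      rw [← hiso x₀ _ hx₀c hx₀n (heic i) (hein i), hfe i]
      exact dist_two_of_apply_eq_neg (hξ'.1 i) (hη'.1 i) hxn (hxi i)
    have hx₀xi : ∀ i, x₀ (ξv i) = -(ηv i) :=
      fun i => apply_eq_neg_of_dist_two (hξ.1 i) (hη.1 i) hx₀c hx₀n (hx₀dist i)
    have hηneg : Orthonormal ℂ (fun i => -(ηv i)) := orthonormal_neg hη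
    have hd₀ := face_decomp hξ hηneg (x := x₀) hx₀n.le hx₀xi
    have h0 := hd₀.2.2
    have hsum_neg : (∑ i, rk1 (-(ηv i)) (ξv i)) = -(∑ i, rk1 (ηv i) (ξv i)) := by
      rw [← Finset.sum_neg_distrib]
      exact Finset.sum_congr rfl fun i _ => rk1_neg _ _
    rw [hsum_neg] at h0
    rw [norm_sub_rev]
    exact h0
  have hb1 := hd.1
  have hb2 := hd.2.1
  have hbn := hd.2.2
  have hbz := center_unique hm hξ' hη'neg hb1 hb2 hbn hcenter
  have hsum_neg' : (∑ i, rk1 (-(η'v i)) (ξ'v i)) = -(∑ i, rk1 (η'v i) (ξ'v i)) := by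
    rw [← Finset.sum_neg_distrib]
    exact Finset.sum_congr rfl fun i _ => rk1_neg _ _
  have hfinal := sub_eq_zero.mp hbz
  rw [hsum_neg'] at hfinal
  exact hfinal

include hmap hsurj hiso in
/-- Master transport lemma: `f` maps a family of rank-one partial isometries with orthonormal
data to one with orthonormal data, commutes with negation and with (negated) sums. -/
lemma f_family {m : ℕ} (hm : 0 < m)
    {ξv : Fin m → H₁} {ηv : Fin m → K₁}
    (hξ : Orthonormal ℂ ξv) (hη : Orthonormal ℂ ηv) :
    ∃ ξ'v : Fin m → H₂, ∃ η'v : Fin m → K₂,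
      Orthonormal ℂ ξ'v ∧ Orthonormal ℂ η'v ∧
      (∀ i, f (rk1 (ηv i) (ξv i)) = rk1 (η'v i) (ξ'v i)) ∧
      (∀ i, f (-(rk1 (ηv i) (ξv i))) = -(f (rk1 (ηv i) (ξv i)))) ∧
      f (∑ i, rk1 (ηv i) (ξv i)) = ∑ i, rk1 (η'v i) (ξ'v i) ∧
      f (-(∑ i, rk1 (ηv i) (ξv i))) = -(∑ i, rk1 (η'v i) (ξ'v i)) := by
  have hchoice : ∀ i, ∃ ξ' : H₂, ∃ η' : K₂,
      ‖ξ'‖ = 1 ∧ ‖η'‖ = 1 ∧ f (rk1 (ηv i) (ξv i)) = rk1 η' ξ' :=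
    fun i => (f_rankone f hmap hsurj hiso (hξ.1 i) (hη.1 i)).1
  choose ξ'v η'v hξ'n hη'n hfe using hchoice
  have hneg : ∀ i, f (-(rk1 (ηv i) (ξv i))) = -(f (rk1 (ηv i) (ξv i))) :=
    fun i => (f_rankone f hmap hsurj hiso (hξ.1 i) (hη.1 i)).2
  have heic : ∀ i, IsCompactOperator (rk1 (ηv i) (ξv i)) := fun i => rk1_compact _ _
  have hein : ∀ i, ‖rk1 (ηv i) (ξv i)‖ = 1 := fun i => rk1_norm (hη.1 i) (hξ.1 i)
  -- X-side distance bounds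
  have hXsub : ∀ i j, i ≠ j → ‖rk1 (ηv i) (ξv i) - rk1 (ηv j) (ξv j)‖ ≤ 1 := by
    intro i j hij
    have hb1 : ∀ k : Fin 1, (-(rk1 (ηv j) (ξv j))) ((fun _ : Fin 1 => ξv i) k) = 0 := by
      intro k
      rw [ContinuousLinearMap.neg_apply, rk1_apply, hξ.2 (Ne.symm hij), zero_smul, neg_zero]
    have hb2 : ∀ k : Fin 1, ContinuousLinearMap.adjoint (-(rk1 (ηv j) (ξv j)))
        ((fun _ : Fin 1 => ηv i) k) = 0 := by
      intro k
      rw [map_neg, ContinuousLinearMap.neg_apply, rk1_adjoint, rk1_apply,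
        hη.2 (Ne.symm hij), zero_smul, neg_zero]
    have h0 := norm_sum_add_le (orthonormal_single (hξ.1 i)) (orthonormal_single (hη.1 i))
      _ hb1 hb2 (by rw [norm_neg, rk1_norm (hη.1 j) (hξ.1 j)])
    rw [Fin.sum_univ_one] at h0
    rwa [← sub_eq_add_neg] at h0
  have hXadd : ∀ i j, i ≠ j → ‖rk1 (ηv i) (ξv i) + rk1 (ηv j) (ξv j)‖ ≤ 1 := by
    intro i j hij
    have hb1 : ∀ k : Fin 1, (rk1 (ηv j) (ξv j)) ((fun _ : Fin 1 => ξv i) k) = 0 := by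
      intro k
      rw [rk1_apply, hξ.2 (Ne.symm hij), zero_smul]
    have hb2 : ∀ k : Fin 1, ContinuousLinearMap.adjoint (rk1 (ηv j) (ξv j))
        ((fun _ : Fin 1 => ηv i) k) = 0 := by
      intro k
      rw [rk1_adjoint, rk1_apply, hη.2 (Ne.symm hij), zero_smul]
    have h0 := norm_sum_add_le (orthonormal_single (hξ.1 i)) (orthonormal_single (hη.1 i))
      _ hb1 hb2 (le_of_eq (rk1_norm (hη.1 j) (hξ.1 j)))
    rwa [Fin.sum_univ_one] at h0
  -- Y-side distance bounds
  have hYsub : ∀ i j, i ≠ j → ‖rk1 (η'v i) (ξ'v i) - rk1 (η'v j) (ξ'v j)‖ ≤ 1 := by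
    intro i j hij
    rw [← hfe i, ← hfe j, hiso _ _ (heic i) (hein i) (heic j) (hein j)]
    exact hXsub i j hij
  have hYadd : ∀ i j, i ≠ j → ‖rk1 (η'v i) (ξ'v i) + rk1 (η'v j) (ξ'v j)‖ ≤ 1 := by
    intro i j hij
    have h0 : rk1 (η'v i) (ξ'v i) + rk1 (η'v j) (ξ'v j) =
        f (rk1 (ηv i) (ξv i)) - f (-(rk1 (ηv j) (ξv j))) := by
      rw [hneg j, hfe i, hfe j, sub_neg_eq_add]
    rw [h0, hiso _ _ (heic i) (hein i) (compact_clm_neg (heic j))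
      (by rw [norm_neg]; exact hein j), sub_neg_eq_add]
    exact hXadd i j hij
  -- inner products of the images vanish
  have hξ'inner : ∀ i j, i ≠ j → ⟪ξ'v i, ξ'v j⟫ = 0 := by
    intro i j hij
    have hjj : ⟪ξ'v j, ξ'v j⟫ = (1:ℂ) := by
      rw [inner_self_eq_norm_sq_to_K, hξ'n j]; norm_num
    have happj : (rk1 (η'v j) (ξ'v j)) (ξ'v j) = η'v j := by
      rw [rk1_apply, hjj, one_smul]
    have hp1 : ‖(rk1 (η'v i) (ξ'v i)) (ξ'v j) - η'v j‖ ≤ 1 := by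
      have h0 := (rk1 (η'v i) (ξ'v i) - rk1 (η'v j) (ξ'v j)).unit_le_opNorm (ξ'v j)
        (le_of_eq (hξ'n j))
      rw [ContinuousLinearMap.sub_apply, happj] at h0
      exact h0.trans (hYsub i j hij)
    have hp2 : ‖(rk1 (η'v i) (ξ'v i)) (ξ'v j) + η'v j‖ ≤ 1 := by
      have h0 := (rk1 (η'v i) (ξ'v i) + rk1 (η'v j) (ξ'v j)).unit_le_opNorm (ξ'v j)
        (le_of_eq (hξ'n j))
      rw [ContinuousLinearMap.add_apply, happj] at h0
      exact h0.trans (hYadd i j hij)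
    have hz := zero_of_close_pm (hη'n j) hp1 hp2
    rw [rk1_apply] at hz
    rcases smul_eq_zero.mp hz with hc | hc
    · exact hc
    · exfalso
      have h1 := hη'n i
      rw [hc, norm_zero] at h1
      norm_num at h1
  have hη'inner : ∀ i j, i ≠ j → ⟪η'v i, η'v j⟫ = 0 := by
    intro i j hij
    have hadj : ∀ a b : H₂ →L[ℂ] K₂,
        ‖ContinuousLinearMap.adjoint a - ContinuousLinearMap.adjoint b‖ = ‖a - b‖ := by
      intro a b
      rw [← map_sub]
      exact LinearIsometryEquiv.norm_map ContinuousLinearMap.adjoint _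
    have hadj' : ∀ a b : H₂ →L[ℂ] K₂,
        ‖ContinuousLinearMap.adjoint a + ContinuousLinearMap.adjoint b‖ = ‖a + b‖ := by
      intro a b
      rw [← map_add]
      exact LinearIsometryEquiv.norm_map ContinuousLinearMap.adjoint _
    have hYsub' : ‖rk1 (ξ'v i) (η'v i) - rk1 (ξ'v j) (η'v j)‖ ≤ 1 := by
      rw [← rk1_adjoint (η'v i) (ξ'v i), ← rk1_adjoint (η'v j) (ξ'v j), hadj]
      exact hYsub i j hij
    have hYadd' : ‖rk1 (ξ'v i) (η'v i) + rk1 (ξ'v j) (η'v j)‖ ≤ 1 := by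
      rw [← rk1_adjoint (η'v i) (ξ'v i), ← rk1_adjoint (η'v j) (ξ'v j), hadj']
      exact hYadd i j hij
    have hjj : ⟪η'v j, η'v j⟫ = (1:ℂ) := by
      rw [inner_self_eq_norm_sq_to_K, hη'n j]; norm_num
    have happj : (rk1 (ξ'v j) (η'v j)) (η'v j) = ξ'v j := by
      rw [rk1_apply, hjj, one_smul]
    have hp1 : ‖(rk1 (ξ'v i) (η'v i)) (η'v j) - ξ'v j‖ ≤ 1 := by
      have h0 := (rk1 (ξ'v i) (η'v i) - rk1 (ξ'v j) (η'v j)).unit_le_opNorm (η'v j)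
        (le_of_eq (hη'n j))
      rw [ContinuousLinearMap.sub_apply, happj] at h0
      exact h0.trans hYsub'
    have hp2 : ‖(rk1 (ξ'v i) (η'v i)) (η'v j) + ξ'v j‖ ≤ 1 := by
      have h0 := (rk1 (ξ'v i) (η'v i) + rk1 (ξ'v j) (η'v j)).unit_le_opNorm (η'v j)
        (le_of_eq (hη'n j))
      rw [ContinuousLinearMap.add_apply, happj] at h0
      exact h0.trans hYadd'
    have hz := zero_of_close_pm (hξ'n j) hp1 hp2
    rw [rk1_apply] at hz
    rcases smul_eq_zero.mp hz with hc | hc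
    · exact hc
    · exfalso
      have h1 := hξ'n i
      rw [hc, norm_zero] at h1
      norm_num at h1
  have hξ'orth : Orthonormal ℂ ξ'v := ⟨hξ'n, fun i j hij => hξ'inner i j hij⟩
  have hη'orth : Orthonormal ℂ η'v := ⟨hη'n, fun i j hij => hη'inner i j hij⟩
  have hsum2 : f (-(∑ i, rk1 (ηv i) (ξv i))) = -(∑ i, rk1 (η'v i) (ξ'v i)) :=
    f_sum f hmap hsurj hiso hm hξ hη hξ'orth hη'orth hfe
  have hsum1 : f (∑ i, rk1 (ηv i) (ξv i)) = ∑ i, rk1 (η'v i) (ξ'v i) := by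
    have hηneg : Orthonormal ℂ (fun i => -(ηv i)) := orthonormal_neg hη
    have hη'neg : Orthonormal ℂ (fun i => -(η'v i)) := orthonormal_neg hη'orth
    have hfe' : ∀ i, f (rk1 (-(ηv i)) (ξv i)) = rk1 (-(η'v i)) (ξ'v i) := by
      intro i
      rw [rk1_neg, rk1_neg, hneg i, hfe i]
    have h0 := f_sum f hmap hsurj hiso hm hξ hηneg hξ'orth hη'neg hfe'
    have e1 : (∑ i, rk1 (-(ηv i)) (ξv i)) = -(∑ i, rk1 (ηv i) (ξv i)) := by
      rw [← Finset.sum_neg_distrib]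
      exact Finset.sum_congr rfl fun i _ => rk1_neg _ _
    have e2 : (∑ i, rk1 (-(η'v i)) (ξ'v i)) = -(∑ i, rk1 (η'v i) (ξ'v i)) := by
      rw [← Finset.sum_neg_distrib]
      exact Finset.sum_congr rfl fun i _ => rk1_neg _ _
    rw [e1, e2, neg_neg, neg_neg] at h0
    exact h0
  exact ⟨ξ'v, η'v, hξ'orth, hη'orth, hfe, hneg, hsum1, hsum2⟩

end Transport

end TingleyAux

open TingleyAux

/-- A surjective isometry between the unit spheres of two spaces of compact operators sends
`-e` to `-f(e)` for every norm-one finite-rank partial isometry `e`, maps mutually orthogonal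
rank-one partial isometries to mutually orthogonal rank-one partial isometries, and is
additive on them. -/
theorem surjective_isometry_preserves_orthogonal_tripotents
    {H₁ K₁ H₂ K₂ : Type*}
    [NormedAddCommGroup H₁] [InnerProductSpace ℂ H₁] [CompleteSpace H₁]
    [NormedAddCommGroup K₁] [InnerProductSpace ℂ K₁] [CompleteSpace K₁]
    [NormedAddCommGroup H₂] [InnerProductSpace ℂ H₂] [CompleteSpace H₂]
    [NormedAddCommGroup K₂] [InnerProductSpace ℂ K₂] [CompleteSpace K₂]
    (f : (H₁ →L[ℂ] K₁) → (H₂ →L[ℂ] K₂))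
    (hmap : ∀ x : H₁ →L[ℂ] K₁, IsCompactOperator x → ‖x‖ = 1 →
      IsCompactOperator (f x) ∧ ‖f x‖ = 1)
    (hsurj : ∀ y : H₂ →L[ℂ] K₂, IsCompactOperator y → ‖y‖ = 1 →
      ∃ x : H₁ →L[ℂ] K₁, IsCompactOperator x ∧ ‖x‖ = 1 ∧ f x = y)
    (hiso : ∀ x y : H₁ →L[ℂ] K₁, IsCompactOperator x → ‖x‖ = 1 →
      IsCompactOperator y → ‖y‖ = 1 → ‖f x - f y‖ = ‖x - y‖) :
    (∀ e : H₁ →L[ℂ] K₁, IsCompactOperator e → IsPartialIsom e →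
      FiniteDimensional ℂ (LinearMap.range (e : H₁ →ₗ[ℂ] K₁)) → ‖e‖ = 1 → f (-e) = -f e) ∧
    (∀ m : ℕ, 0 < m → ∀ e : Fin m → (H₁ →L[ℂ] K₁),
      (∀ i, IsPartialIsom (e i)) →
      (∀ i, Module.finrank ℂ (LinearMap.range (e i : H₁ →ₗ[ℂ] K₁)) = 1) →
      (∀ i j, i ≠ j → OrthogonalOps (e i) (e j)) →
      (∀ i, IsPartialIsom (f (e i)) ∧
        Module.finrank ℂ (LinearMap.range (f (e i) : H₂ →ₗ[ℂ] K₂)) = 1) ∧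
      (∀ i j, i ≠ j → OrthogonalOps (f (e i)) (f (e j))) ∧
      f (∑ i, e i) = ∑ i, f (e i)) := by
  constructor
  · -- finite-rank partial isometries: antipodes are preserved
    intro e hec hpi hfd hen
    have hne : e ≠ 0 := ne_zero_of_norm_eq_one hen
    obtain ⟨n, hn, ξv, ηv, hξ, hη, hdecomp⟩ := pi_decomp hpi hfd hne
    obtain ⟨ξ'v, η'v, hξ', hη', hfe, hneg, hsum1, hsum2⟩ :=
      f_family f hmap hsurj hiso hn hξ hη
    rw [hdecomp, hsum2, hsum1]
  · -- families of mutually orthogonal rank-one partial isometries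
    intro m hm e hpi hr horth
    have hforms : ∀ i, ∃ ξ : H₁, ∃ η : K₁, ‖ξ‖ = 1 ∧ ‖η‖ = 1 ∧ e i = rk1 η ξ :=
      fun i => rankone_form (hpi i) (hr i)
    choose ξv ηv hξn hηn hform using hforms
    have hinner : ∀ i j, i ≠ j → (inner ℂ (ξv i) (ξv j) : ℂ) = 0 ∧ (inner ℂ (ηv i) (ηv j) : ℂ) = 0 := by
      intro i j hij
      have h0 := horth i j hij
      rw [hform i, hform j] at h0
      exact inner_eq_zero_of_orthogonalOps (ne_zero_of_norm_eq_one (hξn i))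
        (ne_zero_of_norm_eq_one (hξn j)) (ne_zero_of_norm_eq_one (hηn i))
        (ne_zero_of_norm_eq_one (hηn j)) h0
    have hξorth : Orthonormal ℂ ξv := ⟨hξn, fun i j hij => (hinner i j hij).1⟩
    have hηorth : Orthonormal ℂ ηv := ⟨hηn, fun i j hij => (hinner i j hij).2⟩
    obtain ⟨ξ'v, η'v, hξ', hη', hfe, hneg, hsum1, hsum2⟩ :=
      f_family f hmap hsurj hiso hm hξorth hηorth
    have hfei : ∀ i, f (e i) = rk1 (η'v i) (ξ'v i) := by
      intro i
      rw [hform i]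
      exact hfe i
    refine ⟨?_, ?_, ?_⟩
    · intro i
      constructor
      · rw [hfei i]
        exact rk1_isPartialIsom (hξ'.1 i) (hη'.1 i)
      · rw [hfei i]
        exact rk1_finrank_one (hξ'.1 i) (ne_zero_of_norm_eq_one (hη'.1 i))
    · intro i j hij
      rw [hfei i, hfei j]
      exact rk1_orthogonalOps (hξ'.2 hij) (hη'.2 hij)
    · have hsum_e : (∑ i, e i) = ∑ i, rk1 (ηv i) (ξv i) :=
        Finset.sum_congr rfl fun i _ => hform i
      rw [hsum_e, hsum1]
      exact Finset.sum_congr rfl fun i _ => (hfei i).symm
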